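/- Let C be a one-factor two-chain cover on [n] with associated non-hitting walks (V,W), viewed as polygonal paths in ℝ² by linear interpolation. Then the sum over all n elements of their incomparability windows equals the area between the curves V and W: Σ_{c∈[n]} I_C(c) = ∫_0^n (V_s − W_s) ds. -/

import Mathlib

open scoped Classical

/-- A two-chain cover on `[n]`: a (strict) partial order on `Fin n` whose ground set is
partitioned into two chains, `A` and its complement `B = Aᶜ`. -/
structure TwoChainCover (n : ℕ) where
  lt : Fin n → Fin n → Prop
  irrefl : ∀ x, ¬lt x x
  trans : ∀ x y z, lt x y → lt y z → lt x z
  A : Finset (Fin n)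
  chainA : ∀ x ∈ A, ∀ y ∈ A, x ≠ y → lt x y ∨ lt y x
  chainB : ∀ x y : Fin n, x ∉ A → y ∉ A → x ≠ y → lt x y ∨ lt y x

namespace TwoChainCover

variable {n : ℕ}

/-- The incomparability graph of a two-chain cover: `x ∼ y` iff `x ≠ y` and `x, y` are
incomparable in the partial order. -/
def incompGraph (C : TwoChainCover n) : SimpleGraph (Fin n) where
  Adj x y := x ≠ y ∧ ¬C.lt x y ∧ ¬C.lt y x
  symm := ⟨by intro x y h; exact ⟨h.1.symm, h.2.2, h.2.1⟩⟩
  loopless := ⟨by intro x h; exact h.1 rfl⟩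

/-- A two-chain cover has one factor if its incomparability graph is connected. -/
def OneFactor (C : TwoChainCover n) : Prop := C.incompGraph.Connected

/-- `(λ, δ)` is the greedy pair of linear orders of the cover `C`: both are linear
extensions of the partial order (here given as equivs `Fin n ≃ Fin n`, where `λ i` is the
element in position `i`, so that `λ.symm` records ranks), and every incomparable pair
`a ∈ A`, `b ∈ B` is resolved as `a` before `b` in `λ` and `b` before `a` in `δ`. -/
def GreedyPair (C : TwoChainCover n) (lam del : Fin n ≃ Fin n) : Prop :=
  (∀ x y, C.lt x y → lam.symm x < lam.symm y) ∧
  (∀ x y, C.lt x y → del.symm x < del.symm y) ∧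
  (∀ a ∈ C.A, ∀ b : Fin n, b ∉ C.A → ¬C.lt a b → ¬C.lt b a →
    lam.symm a < lam.symm b ∧ del.symm b < del.symm a)

/-- The walk associated with a linear order `e` (so `Γ(C) = (walk C λ, walk C δ)`): at
step `i + 1` the walk goes up if the element in position `i` lies in the chain `A`, and
down otherwise. -/
def walk (C : TwoChainCover n) (e : Fin n ≃ Fin n) : ℕ → ℤ := fun t =>
  ∑ i ∈ Finset.univ.filter (fun i : Fin n => (i : ℕ) < t),
    (if e i ∈ C.A then (1 : ℤ) else -1)

/-- The incomparability window of `c`: the number of elements incomparable to `c`. -/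
noncomputable def window (C : TwoChainCover n) (c : Fin n) : ℕ :=
  (Finset.univ.filter fun y : Fin n => y ≠ c ∧ ¬C.lt y c ∧ ¬C.lt c y).card

/-- `τ(c)`: the number of elements `y ⪯ c`. -/
noncomputable def tau (C : TwoChainCover n) (c : Fin n) : ℕ :=
  (Finset.univ.filter fun y : Fin n => C.lt y c ∨ y = c).card

/-- The rank of `a` within the chain `A` (so `a = a_i` with `i = rankA C a`). -/
noncomputable def rankA (C : TwoChainCover n) (a : Fin n) : ℕ :=
  (Finset.univ.filter fun y : Fin n => y ∈ C.A ∧ C.lt y a).card + 1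

/-- The rank of `b` within the chain `B = Aᶜ` (so `b = b_j` with `j = rankB C b`). -/
noncomputable def rankB (C : TwoChainCover n) (b : Fin n) : ℕ :=
  (Finset.univ.filter fun y : Fin n => y ∉ C.A ∧ C.lt y b).card + 1

/-- The first time the walk associated with `e` has taken `i` up-steps. -/
noncomputable def tUp (C : TwoChainCover n) (e : Fin n ≃ Fin n) (i : ℕ) : ℕ :=
  sInf {t : ℕ | i ≤ (Finset.univ.filter fun j : Fin n => (j : ℕ) < t ∧ e j ∈ C.A).card}

/-- The first time the walk associated with `e` has taken `j` down-steps. -/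
noncomputable def tDown (C : TwoChainCover n) (e : Fin n ≃ Fin n) (j : ℕ) : ℕ :=
  sInf {t : ℕ | j ≤ (Finset.univ.filter fun i : Fin n => (i : ℕ) < t ∧ e i ∉ C.A).card}

end TwoChainCover

/-- The piecewise-linear interpolation of an integer-valued walk, as a function on `ℝ`. -/
noncomputable def interp (f : ℕ → ℤ) (s : ℝ) : ℝ :=
  (f ⌊s⌋₊ : ℝ) + (s - (⌊s⌋₊ : ℝ)) * ((f (⌊s⌋₊ + 1) : ℝ) - (f ⌊s⌋₊ : ℝ))

namespace TwoChainCover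

variable {n : ℕ}

lemma card_lt_rank (e : Fin n ≃ Fin n) (c : Fin n) :
    (Finset.univ.filter fun x : Fin n => e.symm x < e.symm c).card = (e.symm c : ℕ) := by
  have h : (Finset.univ.filter fun x : Fin n => e.symm x < e.symm c).card
      = (Finset.Iio (e.symm c)).card :=
    Finset.card_equiv e.symm (by intro a; simp)
  rw [h, Fin.card_Iio]

lemma rank_of_after (C : TwoChainCover n) (e : Fin n ≃ Fin n)
    (hext : ∀ x y, C.lt x y → e.symm x < e.symm y) (c : Fin n)
    (hinc : ∀ x, x ≠ c → ¬C.lt x c → ¬C.lt c x → e.symm c < e.symm x) :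
    (e.symm c : ℕ) = (Finset.univ.filter fun x : Fin n => C.lt x c).card := by
  rw [← card_lt_rank e c]
  congr 1
  ext x
  simp only [Finset.mem_filter, Finset.mem_univ, true_and]
  constructor
  · intro h
    by_contra hxc
    by_cases hcx : C.lt c x
    · exact absurd h (not_lt.2 (hext c x hcx).le)
    · by_cases hx : x = c
      · subst hx; exact lt_irrefl _ h
      · exact absurd h (not_lt.2 (hinc x hx hxc hcx).le)
  · exact hext x c

lemma rank_of_before (C : TwoChainCover n) (e : Fin n ≃ Fin n)
    (hext : ∀ x y, C.lt x y → e.symm x < e.symm y) (c : Fin n)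
    (hinc : ∀ x, x ≠ c → ¬C.lt x c → ¬C.lt c x → e.symm x < e.symm c) :
    (e.symm c : ℕ) = (Finset.univ.filter fun x : Fin n => C.lt x c).card + C.window c := by
  unfold window
  rw [← card_lt_rank e c]
  have hdisj : Disjoint (Finset.univ.filter fun x : Fin n => C.lt x c)
      (Finset.univ.filter fun y : Fin n => y ≠ c ∧ ¬C.lt y c ∧ ¬C.lt c y) := by
    rw [Finset.disjoint_left]
    intro x hx hx'
    simp only [Finset.mem_filter] at hx hx'
    exact hx'.2.2.1 hx.2
  rw [← Finset.card_union_of_disjoint hdisj]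
  congr 1
  ext x
  simp only [Finset.mem_union, Finset.mem_filter, Finset.mem_univ, true_and]
  constructor
  · intro h
    by_cases hxc : C.lt x c
    · exact Or.inl hxc
    · refine Or.inr ⟨?_, hxc, ?_⟩
      · rintro rfl; exact lt_irrefl _ h
      · intro hcx; exact absurd h (not_lt.2 (hext c x hcx).le)
  · rintro (h | ⟨h1, h2, h3⟩)
    · exact hext x c h
    · exact hinc x h1 h2 h3

lemma window_int (C : TwoChainCover n) (lam del : Fin n ≃ Fin n)
    (hg : C.GreedyPair lam del) (c : Fin n) :
    (C.window c : ℤ) =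
      ((del.symm c : ℤ) - (lam.symm c : ℤ)) * (if c ∈ C.A then 1 else -1) := by
  obtain ⟨hlam, hdel, hres⟩ := hg
  by_cases hc : c ∈ C.A
  · have hA : ∀ x, x ≠ c → ¬C.lt x c → ¬C.lt c x → x ∉ C.A := by
      intro x hx h1 h2 hxA
      exact (C.chainA x hxA c hc hx).elim h1 h2
    have h1 := C.rank_of_after lam hlam c
      (fun x hx ha hb => (hres c hc x (hA x hx ha hb) hb ha).1)
    have h2 := C.rank_of_before del hdel c
      (fun x hx ha hb => (hres c hc x (hA x hx ha hb) hb ha).2)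
    simp only [hc, if_true]
    omega
  · have hA : ∀ x, x ≠ c → ¬C.lt x c → ¬C.lt c x → x ∈ C.A := by
      intro x hx h1 h2
      by_contra hxA
      exact (C.chainB x c hxA hc hx).elim h1 h2
    have h1 := C.rank_of_before lam hlam c
      (fun x hx ha hb => (hres x (hA x hx ha hb) c hc ha hb).1)
    have h2 := C.rank_of_after del hdel c
      (fun x hx ha hb => (hres x (hA x hx ha hb) c hc ha hb).2)
    simp only [hc, if_false]
    omega

lemma sum_walk (C : TwoChainCover n) (e : Fin n ≃ Fin n) :
    ∑ t ∈ Finset.range n, C.walk e t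
      = ∑ x : Fin n, ((n : ℤ) - (e.symm x : ℕ) - 1) * (if x ∈ C.A then 1 else -1) := by
  unfold walk
  calc ∑ t ∈ Finset.range n, ∑ i ∈ Finset.univ.filter (fun i : Fin n => (i : ℕ) < t),
        (if e i ∈ C.A then (1:ℤ) else -1)
      = ∑ t ∈ Finset.range n, ∑ i : Fin n,
          if (i : ℕ) < t then (if e i ∈ C.A then (1:ℤ) else -1) else 0 := by
        refine Finset.sum_congr rfl fun t _ => ?_
        rw [Finset.sum_filter]
    _ = ∑ i : Fin n, ∑ t ∈ Finset.range n,
          if (i : ℕ) < t then (if e i ∈ C.A then (1:ℤ) else -1) else 0 := Finset.sum_comm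
    _ = ∑ i : Fin n, ((n : ℤ) - (i : ℕ) - 1) * (if e i ∈ C.A then (1:ℤ) else -1) := by
        refine Finset.sum_congr rfl fun i _ => ?_
        rw [← Finset.sum_filter, Finset.sum_const]
        have hcard : ((Finset.range n).filter fun t => (i : ℕ) < t) = Finset.Ico ((i:ℕ)+1) n := by
          ext t; simp [Finset.mem_Ico, Finset.mem_range]; omega
        rw [hcard, Nat.card_Ico]
        have hi := i.isLt
        have : ((n - ((i:ℕ)+1) : ℕ) : ℤ) = (n : ℤ) - (i:ℕ) - 1 := by omega
        rw [nsmul_eq_mul, this]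
    _ = ∑ x : Fin n, ((n : ℤ) - (e.symm x : ℕ) - 1) * (if x ∈ C.A then (1:ℤ) else -1) := by
        refine Fintype.sum_equiv e _ _ fun i => ?_
        simp

lemma key_sum (C : TwoChainCover n) (lam del : Fin n ≃ Fin n)
    (hg : C.GreedyPair lam del) :
    (∑ c : Fin n, (C.window c : ℤ)) =
      ∑ t ∈ Finset.range n, (C.walk lam t - C.walk del t) := by
  rw [Finset.sum_sub_distrib, C.sum_walk lam, C.sum_walk del, ← Finset.sum_sub_distrib]
  refine Finset.sum_congr rfl fun x _ => ?_
  rw [C.window_int lam del hg x]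
  ring

lemma walk_zero (C : TwoChainCover n) (e : Fin n ≃ Fin n) : C.walk e 0 = 0 := by
  unfold walk
  simp

lemma walk_top (C : TwoChainCover n) (lam del : Fin n ≃ Fin n) :
    C.walk lam n = C.walk del n := by
  unfold walk
  have huniv : (Finset.univ.filter fun i : Fin n => (i : ℕ) < n) = Finset.univ := by
    ext i; simp [i.isLt]
  rw [huniv, Equiv.sum_comp lam (fun x => if x ∈ C.A then (1:ℤ) else -1),
    Equiv.sum_comp del (fun x => if x ∈ C.A then (1:ℤ) else -1)]

end TwoChainCover

open MeasureTheory in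
lemma interp_eq_on (f : ℕ → ℤ) (t : ℕ) {s : ℝ} (h1 : (t:ℝ) ≤ s) (h2 : s ≤ (t:ℝ)+1) :
    interp f s = (f t : ℝ) + (s - t) * ((f (t+1) : ℝ) - (f t : ℝ)) := by
  rcases eq_or_lt_of_le h2 with h2 | h2
  · have hfl : ⌊s⌋₊ = t + 1 := by
      rw [h2, show (t:ℝ)+1 = ((t+1:ℕ):ℝ) by push_cast; ring, Nat.floor_natCast]
    unfold interp
    rw [hfl, h2]
    push_cast
    ring
  · have hs0 : (0:ℝ) ≤ s := le_trans (by positivity) h1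
    have hfl : ⌊s⌋₊ = t := by
      rw [Nat.floor_eq_iff hs0]
      exact ⟨h1, by exact_mod_cast h2⟩
    unfold interp
    rw [hfl]

open MeasureTheory in
lemma intervalIntegrable_interp (f : ℕ → ℤ) (t : ℕ) :
    IntervalIntegrable (interp f) volume (t:ℝ) ((t:ℝ)+1) := by
  rw [intervalIntegrable_iff_integrableOn_Icc_of_le (by linarith)]
  apply ((continuous_const.add ((continuous_id.sub continuous_const).mul
    continuous_const)).integrableOn_Icc :
      IntegrableOn (fun s : ℝ => (f t : ℝ) + (s - t) * ((f (t+1) : ℝ) - (f t : ℝ))) _ _).congr_fun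
  · intro s hs
    exact (interp_eq_on f t hs.1 hs.2).symm
  · exact measurableSet_Icc

open MeasureTheory in
lemma integral_interp_step (f : ℕ → ℤ) (t : ℕ) :
    ∫ s in (t:ℝ)..((t:ℝ)+1), interp f s = ((f t : ℝ) + (f (t+1) : ℝ))/2 := by
  rw [intervalIntegral.integral_congr (g := fun s : ℝ => (f t : ℝ) + (s - t) * ((f (t+1) : ℝ) - (f t : ℝ)))
    (by intro s hs
        rw [Set.uIcc_of_le (by linarith)] at hs
        exact interp_eq_on f t hs.1 hs.2)]
  have hc : Continuous fun s : ℝ => (s - (t:ℝ)) * ((f (t+1) : ℝ) - (f t : ℝ)) := by continuity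
  rw [intervalIntegral.integral_add intervalIntegrable_const (hc.intervalIntegrable _ _),
    intervalIntegral.integral_const, intervalIntegral.integral_mul_const,
    intervalIntegral.integral_sub intervalIntegral.intervalIntegrable_id intervalIntegrable_const,
    integral_id, intervalIntegral.integral_const]
  simp only [smul_eq_mul]
  ring

open MeasureTheory in
lemma integral_interp (f : ℕ → ℤ) (n : ℕ) :
    ∫ s in (0:ℝ)..(n:ℝ), interp f s = ∑ t ∈ Finset.range n, ((f t : ℝ) + (f (t+1) : ℝ))/2 := by
  rw [show (0:ℝ) = ((0:ℕ):ℝ) by norm_num,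
    ← intervalIntegral.sum_integral_adjacent_intervals (a := fun i : ℕ => (i:ℝ)) (n := n)
      (fun k _ => by push_cast; exact intervalIntegrable_interp f k)]
  exact Finset.sum_congr rfl fun t _ => by push_cast; exact integral_interp_step f t

lemma interp_sub (f g : ℕ → ℤ) (s : ℝ) :
    interp f s - interp g s = interp (fun t => f t - g t) s := by
  unfold interp
  push_cast
  ring

open TwoChainCover in
/-- Let `C` be a one-factor two-chain cover on `[n]` with greedy pair `(λ, δ)` and
associated non-hitting walks `(V, W)`, viewed as polygonal paths via linear
interpolation.  Then the sum of the incomparability windows of all `n` elements equals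
the area between the two curves: `∑_{c ∈ [n]} I_C(c) = ∫_0^n (V_s - W_s) ds`. -/
theorem sum_window_eq_area (n : ℕ) (C : TwoChainCover n)
    (lam del : Fin n ≃ Fin n) (h1 : C.OneFactor) (hg : C.GreedyPair lam del) :
    ((∑ c : Fin n, C.window c : ℕ) : ℝ) =
      ∫ s in (0 : ℝ)..(n : ℝ), (interp (C.walk lam) s - interp (C.walk del) s) := by
  have hI : ∫ s in (0:ℝ)..(n:ℝ), (interp (C.walk lam) s - interp (C.walk del) s)
      = ∑ t ∈ Finset.range n,
          (((C.walk lam t - C.walk del t : ℤ) : ℝ)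
            + ((C.walk lam (t+1) - C.walk del (t+1) : ℤ) : ℝ))/2 := by
    rw [intervalIntegral.integral_congr
      (g := interp (fun t => C.walk lam t - C.walk del t)) (fun s _ => interp_sub _ _ s)]
    exact integral_interp _ n
  rw [hI]
  have hZ : ∑ t ∈ Finset.range n,
      ((C.walk lam t - C.walk del t) + (C.walk lam (t+1) - C.walk del (t+1)))
      = 2 * ∑ c : Fin n, (C.window c : ℤ) := by
    rw [Finset.sum_add_distrib]
    have hshift : ∑ t ∈ Finset.range n, (C.walk lam (t+1) - C.walk del (t+1))
        = ∑ t ∈ Finset.range n, (C.walk lam t - C.walk del t)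
          + (C.walk lam n - C.walk del n) - (C.walk lam 0 - C.walk del 0) := by
      have ha := Finset.sum_range_succ' (fun t => C.walk lam t - C.walk del t) n
      have hb := Finset.sum_range_succ (fun t => C.walk lam t - C.walk del t) n
      linarith [ha, hb]
    rw [hshift, C.walk_top lam del, C.walk_zero lam, C.walk_zero del,
      ← C.key_sum lam del hg]
    ring
  have hZ' : (∑ t ∈ Finset.range n,
      (((C.walk lam t - C.walk del t : ℤ) : ℝ)
        + ((C.walk lam (t+1) - C.walk del (t+1) : ℤ) : ℝ)))
      = 2 * ∑ c : Fin n, (C.window c : ℝ) := by exact_mod_cast hZ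
  rw [← Finset.sum_div, hZ']
  push_cast
  ring
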